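/- arXiv:1602.06836 — 2 statements merged into one kernel-verified Lean document; each statement's English description precedes it below -/
import Mathlib

section
/- For every integer i ≥ 0 there exists a 2-tree G on n = 3·2^i vertices that contains a Hamiltonian path and in which every induced path has size at most 2(i + 1). -/
open SimpleGraph

/-- The set of neighbors of `e i` among the earlier vertices `e j`, `j < i`. -/
def earlierNbrs {V : Type} (G : SimpleGraph V) {p : ℕ} (e : Fin p ≃ V) (i : Fin p) : Set V :=
  {v | ∃ j : Fin p, j < i ∧ v = e j ∧ G.Adj (e i) v}

/-- `e` is a `k`-simplicial ordering of the vertices of `G`. -/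
def IsKSimplicialOrdering {V : Type} [Fintype V] (k : ℕ) (G : SimpleGraph V)
    (e : Fin (Fintype.card V) ≃ V) : Prop :=
  G.IsClique (⇑e '' {i | (i : ℕ) < k}) ∧
  ∀ i : Fin (Fintype.card V), k ≤ (i : ℕ) →
    G.IsClique (earlierNbrs G e i) ∧ (earlierNbrs G e i).ncard = k

/-- A `k`-tree is a graph on at least `k` vertices admitting a `k`-simplicial ordering. -/
def IsKTree {V : Type} [Fintype V] (k : ℕ) (G : SimpleGraph V) : Prop :=
  k ≤ Fintype.card V ∧ ∃ e : Fin (Fintype.card V) ≃ V, IsKSimplicialOrdering k G e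

/-- `G` contains an induced path on `m` vertices. -/
def HasInducedPathOfSize {V : Type} (G : SimpleGraph V) (m : ℕ) : Prop :=
  ∃ S : Set V, S.ncard = m ∧ Nonempty ((G.induce S) ≃g pathGraph m)


namespace TwoTreeAux

/-- A sequence witnessing a Hamiltonian path: `h 0, h 1, ..., h (n-1)` lists all
vertices without repetition, consecutive ones adjacent. -/
def HamSeq {α : Type} (G : SimpleGraph α) (n : ℕ) (h : ℕ → α) : Prop :=
  (∀ v, ∃ k, k < n ∧ h k = v) ∧
  (∀ j, j < n → ∀ k, k < n → h j = h k → j = k) ∧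
  (∀ k, k + 1 < n → G.Adj (h k) (h (k + 1)))

/-- Every "induced path sequence" in `G` has at most `L` vertices. -/
def SeqBound {α : Type} (G : SimpleGraph α) (L : ℕ) : Prop :=
  ∀ (m : ℕ) (v : Fin m → α), Function.Injective v →
    (∀ j k : Fin m, G.Adj (v j) (v k) ↔ ((j : ℕ) + 1 = (k : ℕ) ∨ (k : ℕ) + 1 = (j : ℕ))) →
    m ≤ L

/-- Extend `G` by new simplicial vertices `β`, vertex `w` attached to the pair `f w`. -/
def extend {α β : Type} (G : SimpleGraph α) (f : β → α × α) : SimpleGraph (α ⊕ β) where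
  Adj x y := match x, y with
    | .inl a, .inl b => G.Adj a b
    | .inl a, .inr w => a = (f w).1 ∨ a = (f w).2
    | .inr w, .inl a => a = (f w).1 ∨ a = (f w).2
    | .inr _, .inr _ => False
  symm := by
    constructor
    rintro (a | w) (b | w') h
    · exact G.adj_symm h
    · exact h
    · exact h
    · exact h.elim
  loopless := by
    constructor
    rintro (a | w) h
    · exact G.loopless.irrefl a h
    · exact h.elim

variable {α β : Type}

@[simp] lemma extend_adj_inl_inl (G : SimpleGraph α) (f : β → α × α) (a b : α) :
    (extend G f).Adj (Sum.inl a) (Sum.inl b) ↔ G.Adj a b := Iff.rfl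

@[simp] lemma extend_adj_inl_inr (G : SimpleGraph α) (f : β → α × α) (a : α) (w : β) :
    (extend G f).Adj (Sum.inl a) (Sum.inr w) ↔ (a = (f w).1 ∨ a = (f w).2) := Iff.rfl

@[simp] lemma extend_adj_inr_inl (G : SimpleGraph α) (f : β → α × α) (a : α) (w : β) :
    (extend G f).Adj (Sum.inr w) (Sum.inl a) ↔ (a = (f w).1 ∨ a = (f w).2) := Iff.rfl

@[simp] lemma extend_adj_inr_inr (G : SimpleGraph α) (f : β → α × α) (w w' : β) :
    ¬ (extend G f).Adj (Sum.inr w) (Sum.inr w') := fun h => h.elim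

/-- Key lemma: extending by simplicial vertices increases induced path sizes by
at most 2, since a simplicial vertex can only be an endpoint of an induced path. -/
lemma seqBound_extend (G : SimpleGraph α) (f : β → α × α)
    (hf : ∀ w, G.Adj (f w).1 (f w).2) {L : ℕ} (hG : SeqBound G L) :
    SeqBound (extend G f) (L + 2) := by
  intro m v hinj hiff
  by_cases hm : m ≤ 2
  · omega
  push_neg at hm
  -- every interior vertex of the induced path is an old vertex
  have hint : ∀ j : ℕ, (hj0 : 0 < j) → (hjm : j < m - 1) → ∃ a, v ⟨j, by omega⟩ = Sum.inl a := by
    intro j hj0 hjm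
    set j1 : Fin m := ⟨j - 1, by omega⟩ with hj1
    set j2 : Fin m := ⟨j, by omega⟩ with hj2
    set j3 : Fin m := ⟨j + 1, by omega⟩ with hj3
    rcases hv : v j2 with a | w
    · exact ⟨a, rfl⟩
    exfalso
    have hadj1 : (extend G f).Adj (v j1) (v j2) := by
      rw [hiff]; left; show j - 1 + 1 = j; omega
    have hadj2 : (extend G f).Adj (v j2) (v j3) := by
      rw [hiff]; left; show j + 1 = j + 1; rfl
    rcases hva : v j1 with a | w'
    · rcases hvb : v j3 with b | w''
      · rw [hva, hv] at hadj1
        rw [hv, hvb] at hadj2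
        have hab : a ≠ b := by
          intro hh
          have : v j1 = v j3 := by rw [hva, hvb, hh]
          have h4 : j - 1 = j + 1 := congrArg Fin.val (hinj this)
          omega
        have hGab : G.Adj a b := by
          rw [extend_adj_inl_inr] at hadj1
          rw [extend_adj_inr_inl] at hadj2
          rcases hadj1 with h1 | h1 <;> rcases hadj2 with h2 | h2
          · exact absurd (h1.trans h2.symm) hab
          · rw [h1, h2]; exact hf w
          · rw [h1, h2]; exact (hf w).symm
          · exact absurd (h1.trans h2.symm) hab
        have : (extend G f).Adj (v j1) (v j3) := by
          rw [hva, hvb, extend_adj_inl_inl]; exact hGab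
        rw [hiff] at this
        have h5 : j - 1 + 1 = j + 1 ∨ j + 1 + 1 = j - 1 := this
        omega
      · rw [hv, hvb] at hadj2
        exact extend_adj_inr_inr G f w w'' hadj2
    · rw [hva, hv] at hadj1
      exact extend_adj_inr_inr G f w' w hadj1
  have key : ∀ k : Fin (m - 2), ∃ a, v ⟨(k : ℕ) + 1, by omega⟩ = Sum.inl a :=
    fun k => hint ((k : ℕ) + 1) (by omega) (by omega)
  set u : Fin (m - 2) → α := fun k => (key k).choose with hu_def
  have hu : ∀ k : Fin (m - 2), v ⟨(k : ℕ) + 1, by omega⟩ = Sum.inl (u k) :=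
    fun k => (key k).choose_spec
  have hm2 : m - 2 ≤ L := by
    apply hG (m - 2) u
    · intro k1 k2 he
      have : v ⟨(k1 : ℕ) + 1, by omega⟩ = v ⟨(k2 : ℕ) + 1, by omega⟩ := by
        rw [hu k1, hu k2, he]
      have h6 : (k1 : ℕ) + 1 = (k2 : ℕ) + 1 := congrArg Fin.val (hinj this)
      exact Fin.ext (by omega)
    · intro k1 k2
      have h1 : G.Adj (u k1) (u k2) ↔
          (extend G f).Adj (v ⟨(k1 : ℕ) + 1, by omega⟩) (v ⟨(k2 : ℕ) + 1, by omega⟩) := by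
        rw [hu k1, hu k2, extend_adj_inl_inl]
      rw [h1, hiff]
      show (k1 : ℕ) + 1 + 1 = (k2 : ℕ) + 1 ∨ (k2 : ℕ) + 1 + 1 = (k1 : ℕ) + 1 ↔ _
      omega
  omega


/-- Attach map: new vertex `w` goes on ham edge `(h w, h (w+1))`, the last one on `(h 0, h 1)`. -/
def attach {α : Type} (n : ℕ) (h : ℕ → α) : Fin n → α × α :=
  fun w => if (w : ℕ) + 1 < n then (h w, h ((w : ℕ) + 1)) else (h 0, h 1)

lemma attach_fst {α : Type} (n : ℕ) (h : ℕ → α) (w : Fin n) (hw : (w : ℕ) + 1 < n) :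
    (attach n h w).1 = h (w : ℕ) := by unfold attach; rw [if_pos hw]

lemma attach_snd {α : Type} (n : ℕ) (h : ℕ → α) (w : Fin n) (hw : (w : ℕ) + 1 < n) :
    (attach n h w).2 = h ((w : ℕ) + 1) := by unfold attach; rw [if_pos hw]

lemma attach_fst' {α : Type} (n : ℕ) (h : ℕ → α) (w : Fin n) (hw : ¬ ((w : ℕ) + 1 < n)) :
    (attach n h w).1 = h 0 := by unfold attach; rw [if_neg hw]

lemma attach_adj {α : Type} (G : SimpleGraph α) (n : ℕ) (h : ℕ → α)
    (hs : HamSeq G n h) (hn : 3 ≤ n) (w : Fin n) :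
    G.Adj (attach n h w).1 (attach n h w).2 := by
  unfold attach
  split
  · exact hs.2.2 _ (by assumption)
  · exact hs.2.2 0 (by omega)

/-- The new Hamiltonian sequence on the extension:
`x, h 0, w 0, h 1, w 1, ..., w (n-2), h (n-1)`. -/
def hamExt {α : Type} (n : ℕ) (hn : 0 < n) (h : ℕ → α) : ℕ → α ⊕ Fin n :=
  fun m =>
    if m = 0 then Sum.inr ⟨n - 1, by omega⟩
    else if m % 2 = 1 then Sum.inl (h ((m - 1) / 2))
    else Sum.inr ⟨((m - 2) / 2) % n, Nat.mod_lt _ hn⟩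

lemma hamExt_zero {α : Type} (n : ℕ) (hn : 0 < n) (h : ℕ → α) :
    hamExt n hn h 0 = Sum.inr ⟨n - 1, by omega⟩ := by unfold hamExt; rw [if_pos rfl]

lemma hamExt_odd {α : Type} (n : ℕ) (hn : 0 < n) (h : ℕ → α) (m : ℕ) (hm : m % 2 = 1) :
    hamExt n hn h m = Sum.inl (h ((m - 1) / 2)) := by
  unfold hamExt; rw [if_neg (by omega), if_pos hm]

lemma hamExt_even {α : Type} (n : ℕ) (hn : 0 < n) (h : ℕ → α) (m : ℕ) (h0 : m ≠ 0)
    (hm : m % 2 = 0) :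
    hamExt n hn h m = Sum.inr ⟨((m - 2) / 2) % n, Nat.mod_lt _ hn⟩ := by
  unfold hamExt; rw [if_neg h0, if_neg (by omega)]

lemma hamSeq_extend {α : Type} (G : SimpleGraph α) (n : ℕ) (h : ℕ → α)
    (hs : HamSeq G n h) (hn : 3 ≤ n) :
    HamSeq (extend G (attach n h)) (n + n) (hamExt n (by omega) h) := by
  have hn0 : 0 < n := by omega
  obtain ⟨hsurj, hinj, hadj⟩ := hs
  refine ⟨?_, ?_, ?_⟩
  · -- surjectivity
    rintro (a | w)
    · obtain ⟨k, hk, hke⟩ := hsurj a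
      refine ⟨2 * k + 1, by omega, ?_⟩
      rw [hamExt_odd _ _ _ _ (by omega)]
      have h1 : (2 * k + 1 - 1) / 2 = k := by omega
      rw [h1, hke]
    · by_cases hw : (w : ℕ) = n - 1
      · exact ⟨0, by omega, by rw [hamExt_zero]; congr 1; exact Fin.ext hw.symm⟩
      · refine ⟨2 * (w : ℕ) + 2, by have := w.isLt; omega, ?_⟩
        rw [hamExt_even _ _ _ _ (by omega) (by omega)]
        congr 1
        apply Fin.ext
        show (2 * (w : ℕ) + 2 - 2) / 2 % n = (w : ℕ)
        have h1 : (2 * (w : ℕ) + 2 - 2) / 2 = (w : ℕ) := by omega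
        rw [h1, Nat.mod_eq_of_lt w.isLt]
  · -- injectivity
    intro j hj k hk hjk
    by_cases hj0 : j = 0 <;> by_cases hk0 : k = 0
    · omega
    · subst hj0
      rw [hamExt_zero] at hjk
      by_cases hk1 : k % 2 = 1
      · rw [hamExt_odd _ _ _ _ hk1] at hjk; simp at hjk
      · rw [hamExt_even _ _ _ _ hk0 (by omega)] at hjk
        have h2 : n - 1 = (k - 2) / 2 % n := congrArg Fin.val (Sum.inr_injective hjk)
        rw [Nat.mod_eq_of_lt (by omega : (k - 2) / 2 < n)] at h2
        omega
    · subst hk0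
      rw [hamExt_zero] at hjk
      by_cases hj1 : j % 2 = 1
      · rw [hamExt_odd _ _ _ _ hj1] at hjk; simp at hjk
      · rw [hamExt_even _ _ _ _ hj0 (by omega)] at hjk
        have h2 : (j - 2) / 2 % n = n - 1 := congrArg Fin.val (Sum.inr_injective hjk)
        rw [Nat.mod_eq_of_lt (by omega : (j - 2) / 2 < n)] at h2
        omega
    · by_cases hj1 : j % 2 = 1 <;> by_cases hk1 : k % 2 = 1
      · rw [hamExt_odd _ _ _ _ hj1, hamExt_odd _ _ _ _ hk1] at hjk
        have := hinj _ (by omega) _ (by omega) (Sum.inl_injective hjk)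
        omega
      · rw [hamExt_odd _ _ _ _ hj1, hamExt_even _ _ _ _ hk0 (by omega)] at hjk; simp at hjk
      · rw [hamExt_even _ _ _ _ hj0 (by omega), hamExt_odd _ _ _ _ hk1] at hjk; simp at hjk
      · rw [hamExt_even _ _ _ _ hj0 (by omega), hamExt_even _ _ _ _ hk0 (by omega)] at hjk
        have h2 : (j - 2) / 2 % n = (k - 2) / 2 % n := congrArg Fin.val (Sum.inr_injective hjk)
        rw [Nat.mod_eq_of_lt (by omega : (j - 2) / 2 < n),
          Nat.mod_eq_of_lt (by omega : (k - 2) / 2 < n)] at h2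
        omega
  · -- adjacency of consecutive
    intro k hk
    by_cases hk0 : k = 0
    · subst hk0
      rw [hamExt_zero, hamExt_odd _ _ _ _ (by omega)]
      rw [extend_adj_inr_inl]
      left
      rw [attach_fst' _ _ _ (by show ¬ (n - 1 + 1 < n); omega)]
    · by_cases hk1 : k % 2 = 1
      · -- k = 2t+1 → k+1 = 2t+2 even
        rw [hamExt_odd _ _ _ _ hk1, hamExt_even _ _ _ _ (by omega) (by omega)]
        rw [extend_adj_inl_inr]
        left
        have hv : ((k + 1 - 2) / 2 % n) = (k - 1) / 2 := by
          rw [Nat.mod_eq_of_lt (by omega : (k + 1 - 2) / 2 < n)]; omega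
        have hlt : ((⟨(k + 1 - 2) / 2 % n, Nat.mod_lt _ hn0⟩ : Fin n) : ℕ) + 1 < n := by
          show (k + 1 - 2) / 2 % n + 1 < n
          rw [hv]; omega
        rw [attach_fst _ _ _ hlt]
        have harg : (k - 1) / 2 = (k + 1 - 2) / 2 % n := by rw [hv]
        exact congrArg h harg
      · -- k even ≥ 2 → k+1 odd
        rw [hamExt_even _ _ _ _ hk0 (by omega), hamExt_odd _ _ _ _ (by omega)]
        rw [extend_adj_inr_inl]
        right
        have hv : ((k - 2) / 2 % n) = (k - 2) / 2 := Nat.mod_eq_of_lt (by omega)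
        have hlt : ((⟨(k - 2) / 2 % n, Nat.mod_lt _ hn0⟩ : Fin n) : ℕ) + 1 < n := by
          show (k - 2) / 2 % n + 1 < n
          rw [hv]; omega
        rw [attach_snd _ _ _ hlt]
        refine congrArg h ?_
        show (k + 1 - 1) / 2 = (k - 2) / 2 % n + 1
        rw [hv]; omega
/-- The simplicial ordering of the extension: old order first, then the new vertices. -/
def extOrder (n : ℕ) (hc : Fintype.card (Fin n ⊕ Fin n) = n + n)
    (e : Fin (Fintype.card (Fin n)) ≃ Fin n) :
    Fin (Fintype.card (Fin n ⊕ Fin n)) ≃ (Fin n ⊕ Fin n) :=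
  (finCongr hc).trans (finSumFinEquiv.symm.trans
    (Equiv.sumCongr ((finCongr (Fintype.card_fin n).symm).trans e) (Equiv.refl (Fin n))))

lemma extOrder_lt (n : ℕ) (hc : Fintype.card (Fin n ⊕ Fin n) = n + n)
    (e : Fin (Fintype.card (Fin n)) ≃ Fin n) (i : Fin (Fintype.card (Fin n ⊕ Fin n)))
    (hi : (i : ℕ) < n) (hi' : (i : ℕ) < Fintype.card (Fin n)) :
    extOrder n hc e i = Sum.inl (e ⟨(i : ℕ), hi'⟩) := by
  simp only [extOrder, Equiv.trans_apply]
  rw [show (finCongr hc i) = Fin.castAdd n ⟨(i : ℕ), hi⟩ from Fin.ext rfl,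
    finSumFinEquiv_symm_apply_castAdd]
  rfl

lemma extOrder_ge (n : ℕ) (hc : Fintype.card (Fin n ⊕ Fin n) = n + n)
    (e : Fin (Fintype.card (Fin n)) ≃ Fin n) (i : Fin (Fintype.card (Fin n ⊕ Fin n)))
    (hi : n ≤ (i : ℕ)) (hi2 : (i : ℕ) - n < n) :
    extOrder n hc e i = Sum.inr ⟨(i : ℕ) - n, hi2⟩ := by
  simp only [extOrder, Equiv.trans_apply]
  rw [show (finCongr hc i) = Fin.natAdd n ⟨(i : ℕ) - n, hi2⟩ from
      Fin.ext (by show (i : ℕ) = n + ((i : ℕ) - n); omega),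
    finSumFinEquiv_symm_apply_natAdd]
  rfl

lemma simplicial_extend (n : ℕ) (hn : 2 ≤ n) (G : SimpleGraph (Fin n))
    (f : Fin n → Fin n × Fin n) (hf : ∀ w, G.Adj (f w).1 (f w).2)
    (hc : Fintype.card (Fin n ⊕ Fin n) = n + n)
    (e : Fin (Fintype.card (Fin n)) ≃ Fin n) (he : IsKSimplicialOrdering 2 G e) :
    IsKSimplicialOrdering 2 (extend G f) (extOrder n hc e) := by
  have hcf : Fintype.card (Fin n) = n := Fintype.card_fin n
  constructor
  · -- initial clique
    rintro x ⟨ix, hix, rfl⟩ y ⟨iy, hiy, rfl⟩ hxy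
    simp only [Set.mem_setOf_eq] at hix hiy
    rw [extOrder_lt n hc e ix (by omega) (by omega)] at hxy ⊢
    rw [extOrder_lt n hc e iy (by omega) (by omega)] at hxy ⊢
    rw [extend_adj_inl_inl]
    refine he.1 ⟨⟨(ix : ℕ), by omega⟩, hix, rfl⟩ ⟨⟨(iy : ℕ), by omega⟩, hiy, rfl⟩ ?_
    intro hh
    exact hxy (congrArg Sum.inl hh)
  · intro i hi
    have hiLt : (i : ℕ) < n + n := Nat.lt_of_lt_of_eq i.isLt hc
    by_cases hcase : (i : ℕ) < n
    · -- an old vertex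
      set i' : Fin (Fintype.card (Fin n)) := ⟨(i : ℕ), by omega⟩ with hi'def
      have hE : extOrder n hc e i = Sum.inl (e i') := extOrder_lt n hc e i hcase _
      have hset : earlierNbrs (extend G f) (extOrder n hc e) i
          = Sum.inl '' (earlierNbrs G e i') := by
        ext v
        constructor
        · rintro ⟨j, hj, rfl, hadj⟩
          have hjv : (j : ℕ) < (i : ℕ) := hj
          have hEj : extOrder n hc e j = Sum.inl (e ⟨(j : ℕ), by omega⟩) :=
            extOrder_lt n hc e j (by omega) _
          rw [hE, hEj, extend_adj_inl_inl] at hadj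
          rw [hEj]
          exact ⟨e ⟨(j : ℕ), by omega⟩, ⟨⟨(j : ℕ), by omega⟩, hjv, rfl, hadj⟩, rfl⟩
        · rintro ⟨w, ⟨j', hj', rfl, hadj⟩, rfl⟩
          have hj'v : (j' : ℕ) < (i : ℕ) := hj'
          have hj'n : (j' : ℕ) < n := by have := j'.isLt; omega
          refine ⟨⟨(j' : ℕ), by rw [hc]; omega⟩, hj'v, ?_, ?_⟩
          · rw [extOrder_lt n hc e _ (show (j' : ℕ) < n from hj'n)
              (show (j' : ℕ) < Fintype.card (Fin n) from j'.isLt)]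
          · rw [hE, extend_adj_inl_inl]
            exact hadj
      rw [hset]
      have hold := he.2 i' hi
      constructor
      · rintro x ⟨a, ha, rfl⟩ y ⟨b, hb, rfl⟩ hne
        rw [extend_adj_inl_inl]
        exact hold.1 ha hb (fun hh => hne (congrArg Sum.inl hh))
      · rw [Set.ncard_image_of_injective _ Sum.inl_injective]
        exact hold.2
    · -- a new vertex
      have hilt : (i : ℕ) < n + n := hiLt
      set w : Fin n := ⟨(i : ℕ) - n, by omega⟩ with hwdef
      have hE : extOrder n hc e i = Sum.inr w := extOrder_ge n hc e i (by omega) _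
      have hset : earlierNbrs (extend G f) (extOrder n hc e) i
          = {Sum.inl (f w).1, Sum.inl (f w).2} := by
        ext v
        constructor
        · rintro ⟨j, hj, rfl, hadj⟩
          rw [hE] at hadj
          by_cases hjc : (j : ℕ) < n
          · rw [extOrder_lt n hc e j hjc (by omega)] at hadj ⊢
            rw [extend_adj_inr_inl] at hadj
            rcases hadj with h1 | h1
            · rw [h1]; exact Set.mem_insert _ _
            · rw [h1]; exact Set.mem_insert_of_mem _ rfl
          · rw [extOrder_ge n hc e j (by omega) (by have := j.isLt; omega)] at hadj
            exact absurd hadj (extend_adj_inr_inr _ _ _ _)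
        · intro hv
          have hmk : ∀ a : Fin n, ∃ j : Fin (Fintype.card (Fin n ⊕ Fin n)),
              j < i ∧ extOrder n hc e j = Sum.inl a := by
            intro a
            have ha1 : ((e.symm a) : ℕ) < Fintype.card (Fin n) := (e.symm a).isLt
            have ha2 : ((e.symm a) : ℕ) < n := by omega
            refine ⟨⟨((e.symm a) : ℕ), by rw [hc]; omega⟩, ?_, ?_⟩
            · show ((e.symm a) : ℕ) < (i : ℕ)
              omega
            · rw [extOrder_lt n hc e _ (show ((e.symm a) : ℕ) < n from ha2)
                (show ((e.symm a) : ℕ) < Fintype.card (Fin n) from ha1)]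
              exact congrArg Sum.inl ((congrArg e (Fin.ext rfl)).trans (e.apply_symm_apply a))
          simp only [Set.mem_insert_iff, Set.mem_singleton_iff] at hv
          rcases hv with hv | hv
          · obtain ⟨j, hj, hEj⟩ := hmk (f w).1
            refine ⟨j, hj, by rw [hEj, hv], ?_⟩
            rw [hE, hv, extend_adj_inr_inl]
            left; rfl
          · obtain ⟨j, hj, hEj⟩ := hmk (f w).2
            refine ⟨j, hj, by rw [hEj, hv], ?_⟩
            rw [hE, hv, extend_adj_inr_inl]
            right; rfl
      rw [hset]
      constructor
      · rintro x hx y hy hne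
        simp only [Set.mem_insert_iff, Set.mem_singleton_iff] at hx hy
        rcases hx with rfl | rfl <;> rcases hy with rfl | rfl
        · exact absurd rfl hne
        · rw [extend_adj_inl_inl]; exact hf w
        · rw [extend_adj_inl_inl]; exact (hf w).symm
        · exact absurd rfl hne
      · exact Set.ncard_pair (fun hh => (hf w).ne (Sum.inl_injective hh))


/-! ### Transport along `comap` of an equivalence -/

lemma seqBound_comap {U V : Type} (φ : U ≃ V) (G : SimpleGraph V) {L : ℕ}
    (hb : SeqBound G L) : SeqBound (G.comap φ) L := by
  intro m v hinj hiff
  exact hb m (fun k => φ (v k)) (fun a b hab => hinj (φ.injective hab)) hiff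

lemma hamSeq_comap {U V : Type} (φ : U ≃ V) (G : SimpleGraph V) (n : ℕ) (h : ℕ → V)
    (hs : HamSeq G n h) : HamSeq (G.comap φ) n (fun k => φ.symm (h k)) := by
  obtain ⟨hsurj, hinj, hadj⟩ := hs
  refine ⟨?_, ?_, ?_⟩
  · intro u
    obtain ⟨k, hk, hke⟩ := hsurj (φ u)
    refine ⟨k, hk, ?_⟩
    show φ.symm (h k) = u
    rw [hke]
    exact φ.symm_apply_apply u
  · intro j hj k hk hjk
    exact hinj j hj k hk (φ.symm.injective hjk)
  · intro k hk
    rw [comap_adj, Equiv.apply_symm_apply, Equiv.apply_symm_apply]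
    exact hadj k hk

lemma simplicial_comap {U V : Type} [Fintype U] [Fintype V] (φ : U ≃ V) (G : SimpleGraph V)
    (k : ℕ) (e : Fin (Fintype.card V) ≃ V) (he : IsKSimplicialOrdering k G e) :
    IsKSimplicialOrdering k (G.comap φ)
      ((finCongr (Fintype.card_congr φ)).trans (e.trans φ.symm)) := by
  set hcc := Fintype.card_congr φ with hccdef
  set ε := (finCongr hcc).trans (e.trans φ.symm) with hε
  have hεap : ∀ i, ε i = φ.symm (e (Fin.cast hcc i)) := fun i => rfl
  have hφadj : ∀ x y : V, (G.comap φ).Adj (φ.symm x) (φ.symm y) ↔ G.Adj x y := by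
    intro x y; rw [comap_adj, Equiv.apply_symm_apply, Equiv.apply_symm_apply]
  constructor
  · rintro x ⟨ix, hix, rfl⟩ y ⟨iy, hiy, rfl⟩ hne
    rw [hεap ix, hεap iy, hφadj]
    refine he.1 ⟨Fin.cast hcc ix, hix, rfl⟩ ⟨Fin.cast hcc iy, hiy, rfl⟩ ?_
    intro hh
    exact hne (by rw [hεap ix, hεap iy]; exact congrArg φ.symm hh)
  · intro i hik
    have hset : earlierNbrs (G.comap φ) ε i
        = φ.symm '' (earlierNbrs G e (Fin.cast hcc i)) := by
      ext v
      constructor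
      · rintro ⟨j, hj, rfl, hadj2⟩
        rw [hεap i, hεap j, hφadj] at hadj2
        exact ⟨e (Fin.cast hcc j), ⟨Fin.cast hcc j, hj, rfl, hadj2⟩, (hεap j).symm⟩
      · rintro ⟨x, ⟨j', hj', rfl, hadj2⟩, rfl⟩
        refine ⟨Fin.cast hcc.symm j', hj', ?_, ?_⟩
        · have h1 : ε (Fin.cast hcc.symm j') = φ.symm (e j') := by
            rw [hεap]
            exact congrArg φ.symm (congrArg e (Fin.ext rfl))
          exact h1.symm
        · rw [hεap i, hφadj]
          exact hadj2
    rw [hset]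
    have hold := he.2 (Fin.cast hcc i) hik
    constructor
    · rintro x ⟨a, ha, rfl⟩ y ⟨b, hb, rfl⟩ hne
      rw [hφadj]
      exact hold.1 ha hb (fun hh => hne (congrArg φ.symm hh))
    · rw [Set.ncard_image_of_injective _ φ.symm.injective]
      exact hold.2

/-! ### From a Hamiltonian sequence to a Hamiltonian path -/

lemma hamSeq_walk {α : Type} (G : SimpleGraph α) (n : ℕ) (h : ℕ → α)
    (hs : HamSeq G n h) (hn : 0 < n) :
    ∃ (u v : α) (p : G.Walk u v), p.IsPath ∧ ∀ w, w ∈ p.support := by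
  obtain ⟨hsurj, hinj, hadj⟩ := hs
  have key : ∀ k, k < n → ∃ p : G.Walk (h 0) (h k), p.IsPath ∧
      (∀ w, w ∈ p.support ↔ ∃ j, j ≤ k ∧ h j = w) := by
    intro k
    induction k with
    | zero =>
      intro _
      refine ⟨SimpleGraph.Walk.nil, SimpleGraph.Walk.IsPath.nil, ?_⟩
      intro w
      simp only [SimpleGraph.Walk.support_nil, List.mem_singleton]
      constructor
      · rintro rfl; exact ⟨0, le_refl 0, rfl⟩
      · rintro ⟨j, hj, rfl⟩
        rw [Nat.le_zero] at hj
        rw [hj]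
    | succ k ih =>
      intro hk1
      obtain ⟨p, hp, hsup⟩ := ih (by omega)
      have hnotin : h (k + 1) ∉ p.support := by
        intro hmem
        rw [hsup] at hmem
        obtain ⟨j, hj, hje⟩ := hmem
        have := hinj j (by omega) (k + 1) hk1 hje
        omega
      refine ⟨p.concat (hadj k hk1), ?_, ?_⟩
      · rw [SimpleGraph.Walk.isPath_def, SimpleGraph.Walk.support_concat,
          List.nodup_append]
        refine ⟨hp.support_nodup, List.nodup_singleton _, ?_⟩
        intro a ha b hb
        rw [List.mem_singleton] at hb
        subst hb
        rintro rfl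
        exact hnotin ha
      · intro w
        rw [SimpleGraph.Walk.support_concat, List.mem_append,
          List.mem_singleton, hsup]
        constructor
        · rintro (⟨j, hj, rfl⟩ | rfl)
          · exact ⟨j, by omega, rfl⟩
          · exact ⟨k + 1, le_refl _, rfl⟩
        · rintro ⟨j, hj, rfl⟩
          by_cases hjk : j ≤ k
          · left; exact ⟨j, hjk, rfl⟩
          · right
            have : j = k + 1 := by omega
            rw [this]
  obtain ⟨p, hp, hsup⟩ := key (n - 1) (by omega)
  refine ⟨h 0, h (n - 1), p, hp, fun w => ?_⟩
  rw [hsup]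
  obtain ⟨k, hk, hke⟩ := hsurj w
  exact ⟨k, by omega, hke⟩

/-! ### Induced paths give induced path sequences -/

lemma le_of_seqBound {α : Type} (G : SimpleGraph α) {L m : ℕ}
    (hb : SeqBound G L) (hp : HasInducedPathOfSize G m) : m ≤ L := by
  obtain ⟨S, -, ⟨φ⟩⟩ := hp
  refine hb m (fun j => ((φ.symm j : S) : α)) ?_ ?_
  · intro j k hjk
    exact φ.symm.injective (Subtype.coe_injective hjk)
  · intro j k
    have h1 : G.Adj ((φ.symm j : S) : α) ((φ.symm k : S) : α) ↔
        (G.induce S).Adj (φ.symm j) (φ.symm k) := by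
      simp [comap_adj]
    rw [h1, φ.symm.map_adj_iff, pathGraph_adj]

lemma hamSeq_congr {α : Type} {G : SimpleGraph α} {a b : ℕ} {h : ℕ → α}
    (hs : HamSeq G a h) (hab : a = b) : HamSeq G b h := hab ▸ hs

/-! ### The main induction -/

def GoodAt (i : ℕ) : Prop :=
  ∃ G : SimpleGraph (Fin (3 * 2 ^ i)),
    IsKTree 2 G ∧ (∃ h : ℕ → Fin (3 * 2 ^ i), HamSeq G (3 * 2 ^ i) h) ∧
    SeqBound G (2 * (i + 1))

lemma goodAt_zero : GoodAt 0 := by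
  have h3 : (3 : ℕ) * 2 ^ 0 = 3 := by norm_num
  refine ⟨⊤, ⟨?_, finCongr (Fintype.card_fin _), ?_, ?_⟩, ⟨fun k =>
    ⟨k % 3, lt_of_lt_of_le (Nat.mod_lt _ (by norm_num)) (by norm_num)⟩, ?_, ?_, ?_⟩, ?_⟩
  · rw [Fintype.card_fin]; omega
  · rintro x _ y _ hne
    exact hne
  · intro i hi
    have hiv : (i : ℕ) < 3 := by
      have := Nat.lt_of_lt_of_eq i.isLt ((Fintype.card_fin _).trans h3)
      omega
    have hi2 : (i : ℕ) = 2 := by omega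
    have hset : earlierNbrs ⊤ (finCongr (Fintype.card_fin (3 * 2 ^ 0))) i
        = {(⟨0, by omega⟩ : Fin (3 * 2 ^ 0)), ⟨1, by omega⟩} := by
      ext v
      constructor
      · rintro ⟨j, hj, rfl, hadj⟩
        have hjv : (j : ℕ) < (i : ℕ) := hj
        have hjval : ((finCongr (Fintype.card_fin (3 * 2 ^ 0)) j : Fin (3 * 2 ^ 0)) : ℕ)
            = (j : ℕ) := rfl
        by_cases hj0 : (j : ℕ) = 0
        · left
          apply Fin.ext
          show (j : ℕ) = 0
          omega
        · right
          apply Fin.ext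
          show (j : ℕ) = 1
          omega
      · intro hv
        have hvlt : (v : ℕ) < 2 := by
          rcases hv with rfl | hv
          · show (0 : ℕ) < 2; omega
          · rw [Set.mem_singleton_iff] at hv
            rw [hv]; show (1 : ℕ) < 2; omega
        refine ⟨⟨(v : ℕ), by rw [Fintype.card_fin]; exact lt_of_lt_of_le hvlt (by norm_num)⟩,
          ?_, ?_, ?_⟩
        · show (v : ℕ) < (i : ℕ); omega
        · exact Fin.ext rfl
        · intro heq
          have := congrArg Fin.val heq
          have h5 : (i : ℕ) = (v : ℕ) := this
          omega
    rw [hset]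
    constructor
    · rintro x _ y _ hne
      exact hne
    · exact Set.ncard_pair (by intro hh; have := congrArg Fin.val hh; simp at this)
  · -- surjectivity of base ham
    intro v
    have hv3 : (v : ℕ) < 3 := Nat.lt_of_lt_of_eq v.isLt h3
    exact ⟨(v : ℕ), by omega, Fin.ext (by show (v : ℕ) % 3 = (v : ℕ); omega)⟩
  · intro j hj k hk hjk
    have hj3 : j < 3 := by omega
    have hk3 : k < 3 := by omega
    have := congrArg Fin.val hjk
    have h6 : j % 3 = k % 3 := this
    omega
  · intro k hk
    have : k + 1 < 3 := by omega
    intro heq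
    have h7 : k % 3 = (k + 1) % 3 := congrArg Fin.val heq
    omega
  · -- SeqBound ⊤ 2
    intro m v hinj hiff
    by_contra hm
    push_neg at hm
    have h02 : (⟨0, by omega⟩ : Fin m) ≠ ⟨2, by omega⟩ := by
      intro hh; have := congrArg Fin.val hh; simp at this
    have hne : v ⟨0, by omega⟩ ≠ v ⟨2, by omega⟩ := fun hh => h02 (hinj hh)
    have : (⊤ : SimpleGraph (Fin (3 * 2 ^ 0))).Adj (v ⟨0, by omega⟩) (v ⟨2, by omega⟩) := hne
    rw [hiff] at this
    rcases this with h | h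
    · have : (0 : ℕ) + 1 = 2 := h
      omega
    · have : (2 : ℕ) + 1 = 0 := h
      omega

lemma goodAt_succ (i : ℕ) (ih : GoodAt i) : GoodAt (i + 1) := by
  obtain ⟨G, ⟨hcard2, e, he⟩, ⟨h, hham⟩, hbound⟩ := ih
  have hn3 : 3 ≤ 3 * 2 ^ i := by
    have h1 : 1 ≤ 2 ^ i := Nat.one_le_two_pow
    calc 3 = 3 * 1 := by ring
    _ ≤ 3 * 2 ^ i := Nat.mul_le_mul_left 3 h1
  have hN : 3 * 2 ^ (i + 1) = 3 * 2 ^ i + 3 * 2 ^ i := by rw [pow_succ]; ring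
  have hc : Fintype.card (Fin (3 * 2 ^ i) ⊕ Fin (3 * 2 ^ i)) = 3 * 2 ^ i + 3 * 2 ^ i := by simp
  have hf := attach_adj G (3 * 2 ^ i) h hham hn3
  set κ : Fin (3 * 2 ^ (i + 1)) ≃ (Fin (3 * 2 ^ i) ⊕ Fin (3 * 2 ^ i)) :=
    (finCongr hN).trans finSumFinEquiv.symm with hκ
  refine ⟨(extend G (attach (3 * 2 ^ i) h)).comap κ, ⟨?_, ?_⟩, ⟨?_, ?_⟩, ?_⟩
  · rw [Fintype.card_fin, hN]; omega
  · exact ⟨_, simplicial_comap κ (extend G (attach (3 * 2 ^ i) h)) 2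
      (extOrder (3 * 2 ^ i) hc e)
      (simplicial_extend (3 * 2 ^ i) (by omega) G (attach (3 * 2 ^ i) h) hf hc e he)⟩
  · exact fun k => κ.symm (hamExt (3 * 2 ^ i) (by omega) h k)
  · have hh := hamSeq_comap κ (extend G (attach (3 * 2 ^ i) h)) (3 * 2 ^ i + 3 * 2 ^ i)
      (hamExt (3 * 2 ^ i) (by omega) h)
      (hamSeq_extend G (3 * 2 ^ i) h hham hn3)
    exact hamSeq_congr hh hN.symm
  · have hb := seqBound_comap κ (extend G (attach (3 * 2 ^ i) h))
      (seqBound_extend G (attach (3 * 2 ^ i) h) hf hbound)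
    have h8 : 2 * (i + 1 + 1) = 2 * (i + 1) + 2 := by ring
    rw [h8]
    exact hb

lemma goodAt (i : ℕ) : GoodAt i := by
  induction i with
  | zero => exact goodAt_zero
  | succ i ih => exact goodAt_succ i ih

end TwoTreeAux

/-- For every `i ≥ 0` there is a 2-tree on `n = 3·2^i` vertices with a Hamiltonian path
in which every induced path has size at most `2(i+1)`. -/
theorem exists_two_tree_short_induced_paths (i : ℕ) :
    ∃ G : SimpleGraph (Fin (3 * 2 ^ i)),
      IsKTree 2 G ∧
      (∃ (u v : Fin (3 * 2 ^ i)) (p : G.Walk u v), p.IsPath ∧ ∀ w, w ∈ p.support) ∧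
      ∀ m : ℕ, HasInducedPathOfSize G m → m ≤ 2 * (i + 1) := by
  obtain ⟨G, hktree, ⟨h, hham⟩, hbound⟩ := TwoTreeAux.goodAt i
  refine ⟨G, hktree, ?_, ?_⟩
  · exact TwoTreeAux.hamSeq_walk G (3 * 2 ^ i) h hham (by positivity)
  · intro m hm
    exact TwoTreeAux.le_of_seqBound G hbound hm
end

section
/- For all integers k ≥ 2 and i ≥ 1, there exists a k-tree G on n = 3·2^i + k − 2 vertices that contains a Hamiltonian path and in which every induced path has size at most 2·log n. -/
open SimpleGraph

namespace KTreeAux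

/-- one directed edge of the balanced polygon triangulation on `3 * 2^i` vertices. -/
def hstep (i a b : ℕ) : Prop := ∃ t ≤ i, 2 ^ t ∣ a ∧ b = (a + 2 ^ t) % (3 * 2 ^ i)

/-- adjacency in the balanced polygon triangulation. -/
def hadj (i a b : ℕ) : Prop := hstep i a b ∨ hstep i b a

lemma hadj_symm {i a b : ℕ} (h : hadj i a b) : hadj i b a := h.symm

lemma two_pow_le {t i : ℕ} (h : t ≤ i) : 2 ^ t ≤ 2 ^ i := Nat.pow_le_pow_right (by norm_num) h

lemma mod_small {x n : ℕ} (hn : 0 < n) (h : x < 2 * n) :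
    x % n = if x < n then x else x - n := by
  split
  · exact Nat.mod_eq_of_lt ‹_›
  · rw [Nat.mod_eq_sub_mod (by omega), Nat.mod_eq_of_lt (by omega)]

lemma hadj_irrefl {i a : ℕ} : ¬ hadj i a a := by
  rintro (⟨t, ht, -, hb⟩ | ⟨t, ht, -, hb⟩) <;>
  · have h1 : 0 < 2 ^ t := (by positivity)
    have h2 : 2 ^ t ≤ 2 ^ i := two_pow_le ht
    have h3 : 0 < 3 * 2 ^ i := by positivity
    have h4 : a % (3 * 2 ^ i) ≤ a := Nat.mod_le _ _
    have h5 : a + 2 ^ t < 2 * (3 * 2 ^ i) ∨ 3 * 2 ^ i ≤ a := by omega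
    rcases h5 with h5 | h5
    · rw [mod_small h3 h5] at hb; split at hb <;> omega
    · have := Nat.mod_lt (a + 2 ^ t) h3; omega

/-- a neighbour of an odd vertex is `v - 1` or `(v + 1) % n`. -/
lemma odd_nbr {i v x : ℕ} (hv : v < 3 * 2 ^ i) (hx : x < 3 * 2 ^ i)
    (hodd : ¬ 2 ∣ v) (h : hadj i v x) :
    x = (v + 1) % (3 * 2 ^ i) ∨ x = v - 1 := by
  rcases h with ⟨t, ht, hd, hb⟩ | ⟨t, ht, hd, hb⟩
  · have ht0 : t = 0 := by
      by_contra h0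
      exact hodd (dvd_trans (dvd_pow_self 2 h0) hd)
    subst ht0; left; simpa using hb
  · -- 2^t ∣ x, v = (x + 2^t) % n
    have hdn : 2 ^ t ∣ 3 * 2 ^ i := Dvd.dvd.mul_left (pow_dvd_pow 2 ht) 3
    have hdv : 2 ^ t ∣ v := by
      rw [hb, Nat.dvd_mod_iff hdn]
      exact Dvd.dvd.add hd dvd_rfl
    have ht0 : t = 0 := by
      by_contra h0
      exact hodd (dvd_trans (dvd_pow_self 2 h0) hdv)
    subst ht0
    simp only [pow_zero] at hb
    have h3 : 0 < 3 * 2 ^ i := by positivity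
    rw [mod_small h3 (by omega)] at hb
    right
    split at hb
    · omega
    · -- v = x + 1 - n = 0, even, contradiction with odd
      have : v = 0 := by omega
      simp [this] at hodd

lemma odd_ge_one {v : ℕ} (h : ¬ 2 ∣ v) : 1 ≤ v := by omega

/-- the two neighbours of an odd vertex are adjacent (needs `1 ≤ i`). -/
lemma odd_nbrs_adj {i v : ℕ} (hi : 1 ≤ i) (hv : v < 3 * 2 ^ i) (hodd : ¬ 2 ∣ v) :
    hstep i (v - 1) ((v + 1) % (3 * 2 ^ i)) := by
  refine ⟨1, hi, by omega, ?_⟩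
  have h1 : 1 ≤ v := odd_ge_one hodd
  congr 1
  omega

lemma n_succ (i : ℕ) : 3 * 2 ^ (i + 1) = 2 * (3 * 2 ^ i) := by ring

/-- halving an edge between even vertices. -/
lemma hstep_half {i x y : ℕ} (hx : x < 3 * 2 ^ (i + 1))
    (hex : 2 ∣ x) (hey : 2 ∣ y) (h : hstep (i + 1) x y) : hstep i (x / 2) (y / 2) := by
  obtain ⟨t, ht, hd, hb⟩ := h
  rcases Nat.eq_zero_or_pos t with rfl | htpos
  · exfalso
    simp only [pow_zero] at hb
    have h3 : 0 < 3 * 2 ^ (i + 1) := by positivity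
    rw [mod_small h3 (by omega)] at hb
    split at hb <;> omega
  · obtain ⟨s, rfl⟩ : ∃ s, t = s + 1 := ⟨t - 1, by omega⟩
    refine ⟨s, by omega, ?_, ?_⟩
    · obtain ⟨u, hu⟩ := hd
      refine ⟨u, ?_⟩
      have : x = 2 * (2 ^ s * u) := by rw [hu]; ring
      omega
    · rw [hb]
      obtain ⟨x', rfl⟩ := hex
      have e1 : 2 * x' + 2 ^ (s + 1) = 2 * (x' + 2 ^ s) := by ring
      rw [e1, n_succ, Nat.mul_mod_mul_left]
      have e2 : 2 * x' / 2 = x' := by omega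
      rw [e2]
      omega

/-- doubling an edge. -/
lemma hstep_double {i u w : ℕ} (h : hstep i u w) : hstep (i + 1) (2 * u) (2 * w) := by
  obtain ⟨s, hs, hd, hb⟩ := h
  obtain ⟨c, rfl⟩ := hd
  refine ⟨s + 1, by omega, ⟨c, by ring⟩, ?_⟩
  rw [hb, n_succ, show 2 * (2 ^ s * c) + 2 ^ (s + 1) = 2 * (2 ^ s * c + 2 ^ s) by ring,
    Nat.mul_mod_mul_left]

/-- Main bound: an induced path in the balanced triangulation has at most `2i+3` vertices. -/
lemma ipb : ∀ (i m : ℕ) (f : ℕ → ℕ),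
    (∀ j, j < m → f j < 3 * 2 ^ i) →
    (∀ j l, j < l → l < m → f j ≠ f l) →
    (∀ j, j + 1 < m → hadj i (f j) (f (j + 1))) →
    (∀ j l, j + 2 ≤ l → l < m → ¬ hadj i (f j) (f l)) →
    m ≤ 2 * i + 3 := by
  intro i
  induction i with
  | zero =>
    intro m f hrange hinj _ _
    by_contra hm
    push_neg at hm
    have h0 := hrange 0 (by omega); have h1 := hrange 1 (by omega)
    have h2 := hrange 2 (by omega); have h3 := hrange 3 (by omega)
    simp only [pow_zero, mul_one] at h0 h1 h2 h3
    have d01 := hinj 0 1 (by omega) (by omega)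
    have d02 := hinj 0 2 (by omega) (by omega)
    have d03 := hinj 0 3 (by omega) (by omega)
    have d12 := hinj 1 2 (by omega) (by omega)
    have d13 := hinj 1 3 (by omega) (by omega)
    have d23 := hinj 2 3 (by omega) (by omega)
    omega
  | succ i ih =>
    intro m f hrange hinj hadjc hnadj
    by_cases hm : m ≤ 2
    · omega
    push_neg at hm
    have heven : ∀ j, 0 < j → j + 1 < m → 2 ∣ f j := by
      intro j hj hj1
      by_contra hodd
      have ha1 : hadj (i + 1) (f j) (f (j - 1)) := by
        have h := hadjc (j - 1) (by omega)
        have e : j - 1 + 1 = j := by omega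
        rw [e] at h
        exact hadj_symm h
      have ha2 : hadj (i + 1) (f j) (f (j + 1)) := hadjc j hj1
      have r1 := hrange (j - 1) (by omega)
      have r2 := hrange (j + 1) hj1
      have rj := hrange j (by omega)
      have o1 := odd_nbr rj r1 hodd ha1
      have o2 := odd_nbr rj r2 hodd ha2
      have hne : f (j - 1) ≠ f (j + 1) := hinj (j - 1) (j + 1) (by omega) hj1
      have key : hadj (i + 1) (f (j - 1)) (f (j + 1)) := by
        rcases o1 with o1 | o1 <;> rcases o2 with o2 | o2
        · exact absurd (o1.trans o2.symm) hne
        · right; rw [o1, o2]; exact odd_nbrs_adj (by omega) rj hodd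
        · left; rw [o1, o2]; exact odd_nbrs_adj (by omega) rj hodd
        · exact absurd (o1.trans o2.symm) hne
      exact hnadj (j - 1) (j + 1) (by omega) hj1 key
    have step : m - 2 ≤ 2 * i + 3 := by
      apply ih (m - 2) (fun j => f (j + 1) / 2)
      · intro j hj
        have r := hrange (j + 1) (by omega)
        have e := heven (j + 1) (by omega) (by omega)
        rw [n_succ] at r
        omega
      · intro j l hjl hl hgeq
        have ej := heven (j + 1) (by omega) (by omega)
        have el := heven (l + 1) (by omega) (by omega)
        
        exact hinj (j + 1) (l + 1) (by omega) (by omega) (by omega)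
      · intro j hj
        have e1 := heven (j + 1) (by omega) (by omega)
        have e2 := heven (j + 1 + 1) (by omega) (by omega)
        have ha := hadjc (j + 1) (by omega)
        have r1 := hrange (j + 1) (by omega)
        have r2 := hrange (j + 1 + 1) (by omega)
        rcases ha with h | h
        · exact Or.inl (hstep_half r1 e1 e2 h)
        · exact Or.inr (hstep_half r2 e2 e1 h)
      · intro j l hjl hl hcon
        
        have ej := heven (j + 1) (by omega) (by omega)
        have el := heven (l + 1) (by omega) (by omega)
        have key : hadj (i + 1) (f (j + 1)) (f (l + 1)) := by
          rcases hcon with h | h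
          · have h2 := hstep_double h
            rw [Nat.mul_div_cancel' ej, Nat.mul_div_cancel' el] at h2
            exact Or.inl h2
          · have h2 := hstep_double h
            rw [Nat.mul_div_cancel' ej, Nat.mul_div_cancel' el] at h2
            exact Or.inr h2
        exact hnadj (j + 1) (l + 1) (by omega) (by omega) key
    omega


open SimpleGraph

/-- the graph: `k-2` universal vertices joined to the balanced triangulation on `3*2^i`. -/
@[reducible] def myG (i k : ℕ) : SimpleGraph (Fin (3 * 2 ^ i + k - 2)) where
  Adj u v := u ≠ v ∧ (↑u < k - 2 ∨ ↑v < k - 2 ∨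
      hadj i (↑u - (k - 2)) (↑v - (k - 2)))
  symm := ⟨by
    rintro u v ⟨h1, h2 | h2 | h2⟩
    exacts [⟨h1.symm, Or.inr (Or.inl h2)⟩, ⟨h1.symm, Or.inl h2⟩,
      ⟨h1.symm, Or.inr (Or.inr (hadj_symm h2))⟩]⟩
  loopless := ⟨fun u h => h.1 rfl⟩

/-- a walk along consecutive vertices. -/
def consWalk {N : ℕ} (G : SimpleGraph (Fin N))
    (hc : ∀ a : ℕ, (h : a + 1 < N) → G.Adj ⟨a, by omega⟩ ⟨a + 1, h⟩) :
    (d : ℕ) → (a : ℕ) → (h : a + d + 1 = N) → G.Walk ⟨a, by omega⟩ ⟨N - 1, by omega⟩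
  | 0, a, h => Walk.nil.copy rfl (Fin.ext (by simp; omega))
  | d + 1, a, h => Walk.cons (hc a (by omega)) (consWalk G hc d (a + 1) (by omega))

lemma consWalk_support {N : ℕ} (G : SimpleGraph (Fin N))
    (hc : ∀ a : ℕ, (h : a + 1 < N) → G.Adj ⟨a, by omega⟩ ⟨a + 1, h⟩) :
    ∀ (d a : ℕ) (h : a + d + 1 = N) (x : Fin N),
      x ∈ (consWalk G hc d a h).support ↔ a ≤ ↑x := by
  intro d
  induction d with
  | zero =>
    intro a h x
    simp only [consWalk, Walk.support_copy, Walk.support_nil, List.mem_singleton]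
    constructor
    · rintro rfl; rfl
    · intro hax
      have := x.isLt
      exact Fin.ext (by simp; omega)
  | succ d ih =>
    intro a h x
    rw [consWalk, Walk.support_cons, List.mem_cons, ih (a + 1) (by omega) x]
    have := x.isLt
    constructor
    · rintro (rfl | hx)
      · simp
      · omega
    · intro hax
      rcases Nat.eq_or_lt_of_le hax with he | hl
      · exact Or.inl (Fin.ext he.symm)
      · exact Or.inr hl

lemma consWalk_isPath {N : ℕ} (G : SimpleGraph (Fin N))
    (hc : ∀ a : ℕ, (h : a + 1 < N) → G.Adj ⟨a, by omega⟩ ⟨a + 1, h⟩) :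
    ∀ (d a : ℕ) (h : a + d + 1 = N), (consWalk G hc d a h).IsPath := by
  intro d
  induction d with
  | zero => intro a h; simp [consWalk]
  | succ d ih =>
    intro a h
    rw [consWalk, Walk.cons_isPath_iff]
    refine ⟨ih (a + 1) (by omega), ?_⟩
    rw [consWalk_support]
    simp


lemma myG_consec {i k : ℕ} (a : ℕ) (h : a + 1 < 3 * 2 ^ i + k - 2) :
    (myG i k).Adj ⟨a, by omega⟩ ⟨a + 1, h⟩ := by
  constructor
  · intro he
    have := congrArg Fin.val he
    simp at this
  · by_cases hc : a < k - 2
    · exact Or.inl hc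
    · refine Or.inr (Or.inr (Or.inl ⟨0, Nat.zero_le _, one_dvd _, ?_⟩))
      simp only [pow_zero]
      rw [Nat.mod_eq_of_lt (by omega)]
      omega

lemma myG_card (i k : ℕ) (hk : 2 ≤ k) : 3 ≤ 3 * 2 ^ i + k - 2 := by
  have : 1 ≤ 2 ^ i := Nat.one_le_two_pow
  omega

/-- part B: the Hamiltonian path. -/
lemma myG_ham (i k : ℕ) (hk : 2 ≤ k) :
    ∃ (u v : Fin (3 * 2 ^ i + k - 2)) (p : (myG i k).Walk u v),
      p.IsPath ∧ ∀ w, w ∈ p.support := by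
  have h3 := myG_card i k hk
  refine ⟨⟨0, by omega⟩, ⟨3 * 2 ^ i + k - 2 - 1, by omega⟩,
    consWalk (myG i k) (fun a h => myG_consec a h) (3 * 2 ^ i + k - 2 - 1) 0 (by omega), ?_, ?_⟩
  · exact consWalk_isPath _ _ _ _ _
  · intro w
    rw [consWalk_support]
    exact Nat.zero_le _

/-- part C: the induced path bound for `myG`. -/
lemma myG_indpath (i k : ℕ) (hk : 2 ≤ k) (m : ℕ) (S : Set (Fin (3 * 2 ^ i + k - 2)))
    (φ : ((myG i k).induce S) ≃g SimpleGraph.pathGraph m) : m ≤ 2 * i + 3 := by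
  set M := 3 * 2 ^ i + k - 2 with hM
  have hMn : M = 3 * 2 ^ i + (k - 2) := by omega
  set F : Fin m → Fin M := fun j => ↑(φ.symm j) with hF
  have hFadj : ∀ j l : Fin m, (myG i k).Adj (F j) (F l) ↔ (pathGraph m).Adj j l := by
    intro j l
    rw [← φ.symm.map_adj_iff]
    simp [hF, comap_adj]
  have hFinj : Function.Injective F := by
    intro a b hab
    exact φ.symm.injective (Subtype.val_injective hab)
  by_cases hu : ∃ j : Fin m, (F j).val < k - 2
  · -- a universal vertex is on the path: m ≤ 3
    obtain ⟨j, hj⟩ := hu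
    by_contra hm4
    have hm4' : 4 ≤ m := by omega
    obtain ⟨l, hl⟩ : ∃ l : Fin m, (↑j + 2 ≤ (l : ℕ) ∨ (l : ℕ) + 2 ≤ ↑j) := by
      by_cases hc : (j : ℕ) + 2 < m
      · exact ⟨⟨↑j + 2, hc⟩, Or.inl (by simp)⟩
      · have hj4 := j.isLt
        exact ⟨⟨↑j - 2, by omega⟩, Or.inr (by simp; omega)⟩
    have hadj : (myG i k).Adj (F j) (F l) := by
      refine ⟨fun he => ?_, Or.inl hj⟩
      have := hFinj he
      simp [Fin.ext_iff] at this
      omega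
    rw [hFadj, pathGraph_adj] at hadj
    omega
  · push_neg at hu
    set f : ℕ → ℕ := fun j => if h : j < m then (F ⟨j, h⟩).val - (k - 2) else 0 with hf
    apply ipb i m f
    · intro j hj
      simp only [hf, dif_pos hj]
      have := (F ⟨j, hj⟩).isLt
      have := hu ⟨j, hj⟩
      omega
    · intro j l hjl hl heq
      simp only [hf, dif_pos (by omega : j < m), dif_pos hl] at heq
      have h1 := hu ⟨j, by omega⟩
      have h2 := hu ⟨l, hl⟩
      have : F ⟨j, by omega⟩ = F ⟨l, hl⟩ := Fin.ext (by omega)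
      have := hFinj this
      simp [Fin.ext_iff] at this
      omega
    · intro j hj
      have hadjp : (pathGraph m).Adj ⟨j, by omega⟩ ⟨j + 1, hj⟩ := by
        rw [pathGraph_adj]
        simp
      rw [← hFadj] at hadjp
      obtain ⟨-, h | h | h⟩ := hadjp
      · exact absurd h (by simpa using hu ⟨j, by omega⟩)
      · exact absurd h (by simpa using hu ⟨j + 1, hj⟩)
      · simpa only [hf, dif_pos (by omega : j < m), dif_pos hj] using h
    · intro j l hjl hl hcon
      have : (myG i k).Adj (F ⟨j, by omega⟩) (F ⟨l, hl⟩) := by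
        refine ⟨fun he => ?_, Or.inr (Or.inr ?_)⟩
        · have := hFinj he
          simp [Fin.ext_iff] at this
          omega
        · simpa only [hf, dif_pos (by omega : j < m), dif_pos hl] using hcon
      rw [hFadj, pathGraph_adj] at this
      simp at this
      omega


/-! ### Part A: the k-tree structure -/

/-- capped 2-adic valuation: largest `t ≤ i+1` with `2^t ∣ a`. -/
def cv (i a : ℕ) : ℕ := Nat.findGreatest (fun t => 2 ^ t ∣ a) (i + 1)

lemma cv_dvd (i a : ℕ) : 2 ^ cv i a ∣ a :=
  Nat.findGreatest_spec (P := fun t => 2 ^ t ∣ a) (m := 0) (Nat.zero_le _) (by simp)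

lemma cv_le (i a : ℕ) : cv i a ≤ i + 1 := Nat.findGreatest_le _

lemma le_cv {i a t : ℕ} (ht : t ≤ i + 1) (h : 2 ^ t ∣ a) : t ≤ cv i a :=
  Nat.le_findGreatest ht h

lemma cv_eq_of {i a t : ℕ} (ht : t ≤ i + 1) (h : 2 ^ t ∣ a) (h2 : ¬ 2 ^ (t + 1) ∣ a) :
    cv i a = t := by
  have h1 := le_cv ht h
  rcases Nat.lt_or_ge (cv i a) (t + 1) with h3 | h3
  · omega
  · exact absurd (dvd_trans (pow_dvd_pow 2 h3) (cv_dvd i a)) h2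

/-- block comparison for keys. -/
lemma blt {n U V r s : ℕ} (hs : s < n) (h : V < U) : V * n + s < U * n + r := by
  have h1 : (V + 1) * n ≤ U * n := Nat.mul_le_mul_right n h
  have h2 : (V + 1) * n = V * n + n := by ring
  omega

lemma mod_shift_ne {n a s : ℕ} (ha : a < n) (hs1 : 0 < s) (hs2 : s < n) :
    (a + s) % n ≠ a := by
  rw [mod_small (by omega) (by omega)]
  split <;> omega

lemma mod_shift_inv {n b s : ℕ} (hb : b < n) (hs : s ≤ n) :
    ((b + s) % n + (n - s)) % n = b := by
  rw [Nat.mod_add_mod, show b + s + (n - s) = b + n by omega, Nat.add_mod_right,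
    Nat.mod_eq_of_lt hb]

/-- the sorting key. -/
def key (i k : ℕ) (v : Fin (3 * 2 ^ i + k - 2)) : ℕ :=
  if (v : ℕ) < k - 2 then (v : ℕ)
  else (k - 2) + (i + 1 - cv i ((v : ℕ) - (k - 2))) * (3 * 2 ^ i) + ((v : ℕ) - (k - 2))

lemma key_lt_of_lt {i k : ℕ} {v : Fin (3 * 2 ^ i + k - 2)} (h : (v : ℕ) < k - 2) :
    key i k v = (v : ℕ) := if_pos h

lemma key_ge {i k : ℕ} {v : Fin (3 * 2 ^ i + k - 2)} (h : ¬ (v : ℕ) < k - 2) :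
    key i k v = (k - 2) + (i + 1 - cv i ((v : ℕ) - (k - 2))) * (3 * 2 ^ i) + ((v : ℕ) - (k - 2)) :=
  if_neg h

lemma block_cancel {n A B a b : ℕ} (ha : a < n) (hb : b < n)
    (h : A * n + a = B * n + b) : a = b := by
  have h1 : (A * n + a) % n = a % n := by rw [add_comm, Nat.add_mul_mod_self_right]
  have h2 : (B * n + b) % n = b % n := by rw [add_comm, Nat.add_mul_mod_self_right]
  rw [Nat.mod_eq_of_lt ha] at h1
  rw [Nat.mod_eq_of_lt hb] at h2
  rw [h] at h1
  omega

lemma key_injective (i k : ℕ) : Function.Injective (key i k) := by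
  intro u v h
  by_cases hu : (u : ℕ) < k - 2 <;> by_cases hv : (v : ℕ) < k - 2
  · rw [key_lt_of_lt hu, key_lt_of_lt hv] at h
    exact Fin.ext h
  · rw [key_lt_of_lt hu, key_ge hv] at h; omega
  · rw [key_ge hu, key_lt_of_lt hv] at h; omega
  · rw [key_ge hu, key_ge hv] at h
    have hu1 : (u : ℕ) - (k - 2) < 3 * 2 ^ i := by have := u.isLt; omega
    have hv1 : (v : ℕ) - (k - 2) < 3 * 2 ^ i := by have := v.isLt; omega
    have h3 := block_cancel hu1 hv1 (by omega :
      (i + 1 - cv i ((u : ℕ) - (k - 2))) * (3 * 2 ^ i) + ((u : ℕ) - (k - 2))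
      = (i + 1 - cv i ((v : ℕ) - (k - 2))) * (3 * 2 ^ i) + ((v : ℕ) - (k - 2)))
    exact Fin.ext (by omega)

/-- a downward-closed subset of `Fin M` is an initial segment. -/
lemma prefix_of_lower {M : ℕ} (J : Finset (Fin M))
    (hJ : ∀ j j' : Fin M, j' ≤ j → j ∈ J → j' ∈ J) (j : Fin M) :
    j ∈ J ↔ (j : ℕ) < J.card := by
  constructor
  · intro hj
    have hsub : Finset.Iic j ⊆ J := fun x hx => hJ j x (Finset.mem_Iic.mp hx) hj
    have := Finset.card_le_card hsub
    rw [Fin.card_Iic] at this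
    omega
  · intro hj
    by_contra hnj
    have hsub : J ⊆ Finset.Iio j := by
      intro x hx
      rw [Finset.mem_Iio]
      rcases lt_or_ge x j with h | h
      · exact h
      · exact absurd (hJ x j h hx) hnj
    have := Finset.card_le_card hsub
    rw [Fin.card_Iio] at this
    omega


/-- the simplicial ordering: sort vertices by key. -/
def ord (i k : ℕ) : Equiv.Perm (Fin (3 * 2 ^ i + k - 2)) := Tuple.sort (key i k)

lemma ord_strictMono (i k : ℕ) : StrictMono (fun j => key i k (ord i k j)) :=
  (Tuple.monotone_sort (key i k)).strictMono_of_injective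
    ((key_injective i k).comp (Equiv.injective _))

lemma ord_lt_iff (i k : ℕ) (j p : Fin (3 * 2 ^ i + k - 2)) :
    j < p ↔ key i k (ord i k j) < key i k (ord i k p) :=
  ((ord_strictMono i k).lt_iff_lt).symm

/-- vertices sorted below a key threshold form an initial segment. -/
lemma ord_prefix (i k : ℕ) (T : Finset (Fin (3 * 2 ^ i + k - 2))) (κ : ℕ)
    (hT : ∀ v, v ∈ T ↔ key i k v < κ) (j : Fin (3 * 2 ^ i + k - 2)) :
    ord i k j ∈ T ↔ (j : ℕ) < T.card := by
  set J : Finset (Fin (3 * 2 ^ i + k - 2)) :=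
    Finset.filter (fun j => key i k (ord i k j) < κ) Finset.univ with hJ
  have himg : T = Finset.image (ord i k) J := by
    ext v
    simp only [hJ, Finset.mem_image, Finset.mem_filter, Finset.mem_univ, true_and, hT]
    constructor
    · intro hv
      exact ⟨(ord i k).symm v, by rwa [Equiv.apply_symm_apply], Equiv.apply_symm_apply _ _⟩
    · rintro ⟨j, hj, rfl⟩
      exact hj
  have hcard : T.card = J.card := by
    rw [himg, Finset.card_image_of_injective _ (Equiv.injective _)]
  have hlow : ∀ j j' : Fin (3 * 2 ^ i + k - 2), j' ≤ j → j ∈ J → j' ∈ J := by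
    intro a b hba ha
    simp only [hJ, Finset.mem_filter, Finset.mem_univ, true_and] at ha ⊢
    rcases eq_or_lt_of_le hba with rfl | hlt
    · exact ha
    · exact lt_trans ((ord_lt_iff i k b a).mp hlt) ha
  have := prefix_of_lower J hlow j
  simp only [hJ, Finset.mem_filter, Finset.mem_univ, true_and] at this
  rw [hT, hcard, this]

lemma two_pow_succ_lt (i : ℕ) : 2 ^ (i + 1) < 3 * 2 ^ i := by
  rw [pow_succ]
  have : 1 ≤ 2 ^ i := Nat.one_le_two_pow
  omega

lemma dvd_classify {i a : ℕ} (ha : a < 3 * 2 ^ i) (h : 2 ^ (i + 1) ∣ a) :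
    a = 0 ∨ a = 2 ^ (i + 1) := by
  obtain ⟨q, rfl⟩ := h
  have h1 : 1 ≤ 2 ^ i := Nat.one_le_two_pow
  have h2 : 2 ^ (i + 1) = 2 * 2 ^ i := by rw [pow_succ]; ring
  rcases Nat.lt_or_ge q 2 with hq | hq
  · interval_cases q <;> omega
  · exfalso
    have : 2 ^ (i + 1) * 2 ≤ 2 ^ (i + 1) * q := Nat.mul_le_mul_left _ hq
    omega

lemma cv_of_dvd_top {i a : ℕ} (h : 2 ^ (i + 1) ∣ a) : cv i a = i + 1 :=
  le_antisymm (cv_le i a) (le_cv le_rfl h)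

lemma cv_le_i {i a : ℕ} (h : ¬ 2 ^ (i + 1) ∣ a) : cv i a ≤ i := by
  have h1 := cv_le i a
  rcases Nat.lt_or_ge (cv i a) (i + 1) with h2 | h2
  · omega
  · exact absurd (dvd_trans (pow_dvd_pow 2 h2) (cv_dvd i a)) h

lemma odd_quotient {a t : ℕ} (h1 : 2 ^ t ∣ a) (h2 : ¬ 2 ^ (t + 1) ∣ a) :
    ∃ r, a = 2 * (2 ^ t * r) + 2 ^ t := by
  obtain ⟨q, rfl⟩ := h1
  rcases Nat.even_or_odd q with ⟨r, rfl⟩ | ⟨r, hr⟩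
  · exact absurd ⟨r, by rw [pow_succ]; ring⟩ h2
  · exact ⟨r, by rw [hr]; ring⟩

lemma a_eq_of_top {i a : ℕ} (ha : a < 3 * 2 ^ i) (h1 : 2 ^ i ∣ a) (h2 : ¬ 2 ^ (i + 1) ∣ a) :
    a = 2 ^ i := by
  obtain ⟨r, hr⟩ := odd_quotient h1 h2
  rcases Nat.eq_zero_or_pos r with rfl | hpos
  · simpa using hr
  · exfalso
    have : 2 ^ i ≤ 2 ^ i * r := Nat.le_mul_of_pos_right _ hpos
    omega

/-- both candidate earlier neighbours have strictly larger valuation. -/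
lemma bpm_dvd {i a t : ℕ} (ht : t ≤ i) (ha : a < 3 * 2 ^ i)
    (h1 : 2 ^ t ∣ a) (h2 : ¬ 2 ^ (t + 1) ∣ a) :
    2 ^ (t + 1) ∣ (a + 2 ^ t) % (3 * 2 ^ i) ∧
    2 ^ (t + 1) ∣ (a + (3 * 2 ^ i - 2 ^ t)) % (3 * 2 ^ i) := by
  obtain ⟨r, hr⟩ := odd_quotient h1 h2
  rcases Nat.lt_or_ge t i with hti | hti
  · have hdn : 2 ^ (t + 1) ∣ 3 * 2 ^ i := Dvd.dvd.mul_left (pow_dvd_pow 2 (by omega)) 3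
    obtain ⟨s, hs⟩ := hdn
    have hp : 2 ^ (t + 1) = 2 * 2 ^ t := by rw [pow_succ]; ring
    constructor
    · rw [Nat.dvd_mod_iff ⟨s, hs⟩]
      exact ⟨r + 1, by rw [hr, hp]; ring⟩
    · rw [Nat.dvd_mod_iff ⟨s, hs⟩]
      refine ⟨r + s, ?_⟩
      have e2 : 2 ^ (t + 1) * (r + s) = 2 * (2 ^ t * r) + 2 ^ (t + 1) * s := by
        rw [hp]; ring
      have e3 : 2 ^ t ≤ 3 * 2 ^ i := by
        have := two_pow_le ht
        omega
      omega
  · have hti' : t = i := le_antisymm ht hti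
    subst hti'
    have hae : a = 2 ^ t := a_eq_of_top ha h1 h2
    subst hae
    have h3 : 2 ^ t + 2 ^ t = 2 ^ (t + 1) := by rw [pow_succ]; ring
    have h4 : 2 ^ (t + 1) < 3 * 2 ^ t := two_pow_succ_lt t
    constructor
    · rw [h3, Nat.mod_eq_of_lt h4]
    · have : 2 ^ t + (3 * 2 ^ t - 2 ^ t) = 3 * 2 ^ t := by
        have : 1 ≤ 2 ^ t := Nat.one_le_two_pow
        omega
      rw [this, Nat.mod_self]
      exact dvd_zero _


lemma bpm_plus_eq {i a t : ℕ} (ht : t ≤ i) (ha : a < 3 * 2 ^ i) :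
    (a + 2 ^ t) % (3 * 2 ^ i) =
    ((a + (3 * 2 ^ i - 2 ^ t)) % (3 * 2 ^ i) + 2 ^ (t + 1)) % (3 * 2 ^ i) := by
  have e3 : 2 ^ t ≤ 3 * 2 ^ i := by have := two_pow_le ht; omega
  have hp : 2 ^ (t + 1) = 2 * 2 ^ t := by rw [pow_succ]; ring
  rw [Nat.mod_add_mod, show a + (3 * 2 ^ i - 2 ^ t) + 2 ^ (t + 1) = a + 2 ^ t + 3 * 2 ^ i by omega,
    Nat.add_mod_right]

/-- the two earlier neighbours are distinct and adjacent. -/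
lemma bpm_ne {i a t : ℕ} (ht : t ≤ i) (ha : a < 3 * 2 ^ i) :
    (a + (3 * 2 ^ i - 2 ^ t)) % (3 * 2 ^ i) ≠ (a + 2 ^ t) % (3 * 2 ^ i) := by
  intro h
  have h2 : 2 ^ (t + 1) ≤ 2 ^ (i + 1) := two_pow_le (by omega)
  have h3 := two_pow_succ_lt i
  have h4 : 0 < 2 ^ (t + 1) := (by positivity)
  have h5 : (a + (3 * 2 ^ i - 2 ^ t)) % (3 * 2 ^ i) < 3 * 2 ^ i :=
    Nat.mod_lt _ (by positivity)
  have hmod := bpm_plus_eq ht ha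
  rw [h] at hmod
  exact mod_shift_ne (Nat.mod_lt _ (by positivity)) h4 (by omega) hmod.symm

lemma bpm_adj {i a t : ℕ} (ht : t ≤ i) (ha : a < 3 * 2 ^ i)
    (h1 : 2 ^ t ∣ a) (h2 : ¬ 2 ^ (t + 1) ∣ a) :
    hadj i ((a + (3 * 2 ^ i - 2 ^ t)) % (3 * 2 ^ i)) ((a + 2 ^ t) % (3 * 2 ^ i)) := by
  rcases Nat.lt_or_ge t i with hti | hti
  · exact Or.inl ⟨t + 1, by omega, (bpm_dvd ht ha h1 h2).2, bpm_plus_eq ht ha⟩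
  · have hti' : t = i := le_antisymm ht hti
    subst hti'
    have hae : a = 2 ^ t := a_eq_of_top ha h1 h2
    subst hae
    have h3 : 2 ^ t + 2 ^ t = 2 ^ (t + 1) := by rw [pow_succ]; ring
    have h4 : 2 ^ (t + 1) < 3 * 2 ^ t := two_pow_succ_lt t
    have e1 : (2 ^ t + 2 ^ t) % (3 * 2 ^ t) = 2 ^ (t + 1) := by rw [h3, Nat.mod_eq_of_lt h4]
    have e2 : (2 ^ t + (3 * 2 ^ t - 2 ^ t)) % (3 * 2 ^ t) = 0 := by
      have h5 : 1 ≤ 2 ^ t := Nat.one_le_two_pow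
      rw [show 2 ^ t + (3 * 2 ^ t - 2 ^ t) = 3 * 2 ^ t by omega, Nat.mod_self]
    rw [e1, e2]
    refine Or.inr ⟨t, le_rfl, ⟨2, by rw [pow_succ]⟩, ?_⟩
    have h5 : 1 ≤ 2 ^ t := Nat.one_le_two_pow
    rw [show 2 ^ (t + 1) + 2 ^ t = 3 * 2 ^ t by rw [pow_succ]; omega, Nat.mod_self]

lemma pow_succ_not_dvd_pow (s : ℕ) : ¬ 2 ^ (s + 1) ∣ 2 ^ s := by
  intro h
  have h1 := Nat.le_of_dvd ((by positivity)) h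
  have h2 : (2 : ℕ) ^ s < 2 ^ (s + 1) := Nat.pow_lt_pow_right (by norm_num) (by omega)
  omega

/-- classification of earlier neighbours. -/
lemma nbr_classify {i a b t : ℕ} (ha : a < 3 * 2 ^ i) (hb : b < 3 * 2 ^ i)
    (ht : t ≤ i) (h1 : 2 ^ t ∣ a) (h2 : ¬ 2 ^ (t + 1) ∣ a)
    (hab : hadj i a b) (hkb : t ≤ cv i b) :
    b = (a + 2 ^ t) % (3 * 2 ^ i) ∨ b = (a + (3 * 2 ^ i - 2 ^ t)) % (3 * 2 ^ i) := by
  have hcva : cv i a = t := cv_eq_of (by omega) h1 h2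
  rcases hab with ⟨s, hs, hsd, hsb⟩ | ⟨s, hs, hsd, hsb⟩
  · -- b = (a + 2^s) % n
    have hst : s ≤ t := hcva ▸ le_cv (by omega) hsd
    rcases eq_or_lt_of_le hst with rfl | hlt
    · exact Or.inl hsb
    · exfalso
      have hdn : 2 ^ s ∣ 3 * 2 ^ i := Dvd.dvd.mul_left (pow_dvd_pow 2 (by omega)) 3
      have hdn1 : 2 ^ (s + 1) ∣ 3 * 2 ^ i := Dvd.dvd.mul_left (pow_dvd_pow 2 (by omega)) 3
      have hb1 : 2 ^ s ∣ b := by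
        rw [hsb, Nat.dvd_mod_iff hdn]
        exact Dvd.dvd.add hsd dvd_rfl
      have hb2 : ¬ 2 ^ (s + 1) ∣ b := by
        rw [hsb, Nat.dvd_mod_iff hdn1]
        intro hcon
        have ha1 : 2 ^ (s + 1) ∣ a := dvd_trans (pow_dvd_pow 2 (by omega : s + 1 ≤ t)) h1
        exact pow_succ_not_dvd_pow s
          (by simpa [Nat.add_sub_cancel_left] using Nat.dvd_sub hcon ha1)
      have : cv i b = s := cv_eq_of (by omega) hb1 hb2
      omega
  · -- a = (b + 2^s) % n
    have hdn : 2 ^ s ∣ 3 * 2 ^ i := Dvd.dvd.mul_left (pow_dvd_pow 2 (by omega)) 3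
    have ha1 : 2 ^ s ∣ a := by
      rw [hsb, Nat.dvd_mod_iff hdn]
      exact Dvd.dvd.add hsd dvd_rfl
    have hst : s ≤ t := hcva ▸ le_cv (by omega) ha1
    have hbeq : b = (a + (3 * 2 ^ i - 2 ^ s)) % (3 * 2 ^ i) := by
      rw [hsb]
      exact (mod_shift_inv hb (by have := two_pow_le hs; omega)).symm
    rcases eq_or_lt_of_le hst with rfl | hlt
    · exact Or.inr hbeq
    · exfalso
      have hdn1 : 2 ^ (s + 1) ∣ 3 * 2 ^ i := Dvd.dvd.mul_left (pow_dvd_pow 2 (by omega)) 3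
      have hb2 : ¬ 2 ^ (s + 1) ∣ b := by
        intro hcon
        have ha2 : 2 ^ (s + 1) ∣ a := dvd_trans (pow_dvd_pow 2 (by omega : s + 1 ≤ t)) h1
        rw [hsb, Nat.dvd_mod_iff hdn1] at ha2
        exact pow_succ_not_dvd_pow s ((Nat.dvd_add_right hcon).mp ha2)
      have : cv i b = s := cv_eq_of (by omega) hsd hb2
      omega


set_option maxHeartbeats 8000000 in
set_option maxRecDepth 8000 in
/-- Part A: `myG` is a `k`-tree. -/
lemma myG_ktree (i k : ℕ) (hk : 2 ≤ k) : IsKTree k (myG i k) := by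
  have hn1 : 1 ≤ 2 ^ i := Nat.one_le_two_pow
  have h2i : 2 ^ (i + 1) < 3 * 2 ^ i := two_pow_succ_lt i
  have hcM : k - 2 < 3 * 2 ^ i + k - 2 := by omega
  have hyM : k - 2 + 2 ^ (i + 1) < 3 * 2 ^ i + k - 2 := by omega
  set M := 3 * 2 ^ i + k - 2 with hMdef
  set x : Fin M := ⟨k - 2, hcM⟩ with hxdef
  set y : Fin M := ⟨k - 2 + 2 ^ (i + 1), hyM⟩ with hydef
  set F₀ : Finset (Fin M) := Finset.Iio x ∪ {x, y} with hF0def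
  have hxy : x ≠ y := by
    intro h
    have := congrArg Fin.val h
    simp [hxdef, hydef] at this
  have hmemF0 : ∀ v : Fin M, v ∈ F₀ ↔
      ((v : ℕ) < k - 2 ∨ ((v : ℕ) = k - 2 ∨ (v : ℕ) = k - 2 + 2 ^ (i + 1))) := by
    intro v
    simp only [hF0def, Finset.mem_union, Finset.mem_Iio, Fin.lt_def, Finset.mem_insert,
      Finset.mem_singleton, Fin.ext_iff, hxdef, hydef]
    try tauto
  have hkeyF0 : ∀ v : Fin M, v ∈ F₀ ↔ key i k v < k - 2 + 2 ^ (i + 1) + 1 := by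
    intro v
    rw [hmemF0]
    by_cases hv : (v : ℕ) < k - 2
    · rw [key_lt_of_lt hv]; omega
    · rw [key_ge hv]
      have hva : (v : ℕ) - (k - 2) < 3 * 2 ^ i := by have := v.isLt; omega
      constructor
      · rintro (h | h | h)
        · omega
        · have ha0 : (v : ℕ) - (k - 2) = 0 := by omega
          rw [ha0, cv_of_dvd_top (dvd_zero _)]
          simp
          try omega
        · have ha0 : (v : ℕ) - (k - 2) = 2 ^ (i + 1) := by omega
          rw [ha0, cv_of_dvd_top dvd_rfl]
          simp
          try omega
      · intro h
        by_cases hd : 2 ^ (i + 1) ∣ ((v : ℕ) - (k - 2))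
        · rcases dvd_classify hva hd with h0 | h0 <;> omega
        · exfalso
          have hcvle : cv i ((v : ℕ) - (k - 2)) ≤ i := cv_le_i hd
          have hmul : 1 * (3 * 2 ^ i) ≤ (i + 1 - cv i ((v : ℕ) - (k - 2))) * (3 * 2 ^ i) :=
            Nat.mul_le_mul_right _ (by omega)
          omega
  have hdisj : Disjoint (Finset.Iio x) ({x, y} : Finset (Fin M)) := by
    rw [Finset.disjoint_left]
    intro b hb hb2
    rw [Finset.mem_Iio, Fin.lt_def] at hb
    simp only [Finset.mem_insert, Finset.mem_singleton] at hb2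
    rcases hb2 with rfl | rfl
    · omega
    · simp [hxdef, hydef] at hb
  have hcardF0 : F₀.card = k := by
    rw [hF0def, Finset.card_union_of_disjoint hdisj, Fin.card_Iio, Finset.card_pair hxy]
    simp [hxdef]
    omega
  have hkey_iff : ∀ j : Fin M, (ord i k j ∈ F₀ ↔ (j : ℕ) < k) := by
    intro j
    rw [ord_prefix i k F₀ _ hkeyF0 j, hcardF0]
  refine ⟨by rw [Fintype.card_fin]; omega,
    (finCongr (Fintype.card_fin M)).trans (ord i k), ?_, ?_⟩
  · -- initial clique
    have himg : (⇑((finCongr (Fintype.card_fin M)).trans (ord i k))) '' {j | (j : ℕ) < k}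
        = ↑F₀ := by
      ext w
      simp only [Set.mem_image, Set.mem_setOf_eq, Equiv.trans_apply, Finset.mem_coe]
      constructor
      · rintro ⟨j, hj, rfl⟩
        exact (hkey_iff _).mpr (by simpa using hj)
      · intro hw
        refine ⟨(finCongr (Fintype.card_fin M)).symm ((ord i k).symm w), ?_, ?_⟩
        · have h5 := (hkey_iff ((ord i k).symm w)).mp (by rwa [Equiv.apply_symm_apply])
          simpa using h5
        · simp
    rw [himg]
    intro u hu v hv huv
    rw [Finset.mem_coe, hmemF0] at hu hv
    refine ⟨huv, ?_⟩
    rcases hu with hu | hu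
    · exact Or.inl hu
    · rcases hv with hv | hv
      · exact Or.inr (Or.inl hv)
      · refine Or.inr (Or.inr ?_)
        have hne : (u : ℕ) ≠ (v : ℕ) := fun h => huv (Fin.ext h)
        have hadj0 : hstep i (2 ^ (i + 1)) 0 := by
          refine ⟨i, le_rfl, ⟨2, by rw [pow_succ]⟩, ?_⟩
          rw [show 2 ^ (i + 1) + 2 ^ i = 3 * 2 ^ i by rw [pow_succ]; ring, Nat.mod_self]
        rcases hu with hu | hu <;> rcases hv with hv | hv
        · omega
        · rw [show (u : ℕ) - (k - 2) = 0 by omega, show (v : ℕ) - (k - 2) = 2 ^ (i + 1) by omega]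
          exact Or.inr hadj0
        · rw [show (u : ℕ) - (k - 2) = 2 ^ (i + 1) by omega, show (v : ℕ) - (k - 2) = 0 by omega]
          exact Or.inl hadj0
        · omega
  · -- later vertices
    intro p hp
    have hvF0 : ord i k (finCongr (Fintype.card_fin M) p) ∉ F₀ := by
      intro hcon
      have := (hkey_iff _).mp hcon
      simp at this
      omega
    set v : Fin M := ord i k (finCongr (Fintype.card_fin M) p) with hvdef
    have hvc : ¬ (v : ℕ) < k - 2 := fun h => hvF0 ((hmemF0 v).mpr (Or.inl h))
    have hva : (v : ℕ) - (k - 2) < 3 * 2 ^ i := by have := v.isLt; omega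
    have hvd : ¬ 2 ^ (i + 1) ∣ ((v : ℕ) - (k - 2)) := by
      intro h
      rcases dvd_classify hva h with h0 | h0
      · exact hvF0 ((hmemF0 v).mpr (Or.inr (Or.inl (by omega))))
      · exact hvF0 ((hmemF0 v).mpr (Or.inr (Or.inr (by omega))))
    set a := (v : ℕ) - (k - 2) with hadef
    set t := cv i a with htdef
    have ht : t ≤ i := cv_le_i hvd
    have h1 : 2 ^ t ∣ a := cv_dvd i a
    have h2 : ¬ 2 ^ (t + 1) ∣ a := by
      intro h
      have := le_cv (i := i) (a := a) (by omega) h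
      omega
    have hdvdpm := bpm_dvd ht hva h1 h2
    set bp := (a + 2 ^ t) % (3 * 2 ^ i) with hbpdef
    set bm := (a + (3 * 2 ^ i - 2 ^ t)) % (3 * 2 ^ i) with hbmdef
    have hbp : bp < 3 * 2 ^ i := Nat.mod_lt _ (by positivity)
    have hbm : bm < 3 * 2 ^ i := Nat.mod_lt _ (by positivity)
    set wp : Fin M := ⟨k - 2 + bp, by omega⟩ with hwpdef
    set wm : Fin M := ⟨k - 2 + bm, by omega⟩ with hwmdef
    have hwpa : (wp : ℕ) = k - 2 + bp := by simp [hwpdef]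
    have hwma : (wm : ℕ) = k - 2 + bm := by simp [hwmdef]
    have htpow : 0 < 2 ^ t := (by positivity)
    have htpow2 : 2 ^ t ≤ 2 ^ i := two_pow_le ht
    have hbpne : bp ≠ a := mod_shift_ne hva htpow (by omega)
    have hbmne : bm ≠ a := mod_shift_ne hva (by omega) (by omega)
    have hkeyv : key i k v = (k - 2) + (i + 1 - t) * (3 * 2 ^ i) + a := key_ge hvc
    have hkey_lt : ∀ (w : Fin M) (b : ℕ), (w : ℕ) = k - 2 + b → 2 ^ (t + 1) ∣ b →
        b < 3 * 2 ^ i → key i k w < key i k v := by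
      intro w b hwb hdv hblt
      have hwc : ¬ (w : ℕ) < k - 2 := by omega
      have hcvb : t + 1 ≤ cv i b := le_cv (by omega) hdv
      have hcvb2 : cv i b ≤ i + 1 := cv_le i b
      rw [key_ge hwc, hkeyv, show (w : ℕ) - (k - 2) = b by omega]
      have hblt2 := blt (n := 3 * 2 ^ i) (r := a) (U := i + 1 - t) hblt
        (show i + 1 - cv i b < i + 1 - t by omega)
      omega
    have hadjp : hadj i a bp := Or.inl ⟨t, ht, h1, hbpdef⟩
    have hadjm : hadj i a bm := by
      refine Or.inr ⟨t, ht, dvd_trans (pow_dvd_pow 2 (Nat.le_succ t)) hdvdpm.2, ?_⟩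
      rw [hbmdef, Nat.mod_add_mod, show a + (3 * 2 ^ i - 2 ^ t) + 2 ^ t = a + 3 * 2 ^ i by omega,
        Nat.add_mod_right, Nat.mod_eq_of_lt hva]
    have hadjpm : hadj i bm bp := bpm_adj ht hva h1 h2
    have hbmbp : bm ≠ bp := bpm_ne ht hva
    have hwmwp : wm ≠ wp := by
      intro h
      have := congrArg Fin.val h
      rw [hwpa, hwma] at this
      exact hbmbp (by omega)
    set E : Finset (Fin M) := Finset.Iio x ∪ {wm, wp} with hEdef
    have hchar2 : ∀ w : Fin M, w ∈ E → key i k w < key i k v ∧ (myG i k).Adj v w := by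
      intro w hw
      rw [hEdef, Finset.mem_union, Finset.mem_Iio, Finset.mem_insert,
        Finset.mem_singleton] at hw
      rcases hw with hw | rfl | rfl
      · rw [Fin.lt_def] at hw
        have hwx : (w : ℕ) < k - 2 := by simpa [hxdef] using hw
        constructor
        · rw [key_lt_of_lt hwx, hkeyv]; omega
        · exact ⟨fun h => hvc (by rw [h]; exact hwx), Or.inr (Or.inl hwx)⟩
      · refine ⟨hkey_lt wm bm hwma hdvdpm.2 hbm, ?_, Or.inr (Or.inr ?_)⟩
        · intro h
          have := congrArg Fin.val h
          rw [hwma] at this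
          exact hbmne (by omega)
        · rw [show ((wm : ℕ) - (k - 2)) = bm by omega]
          exact hadjm
      · refine ⟨hkey_lt wp bp hwpa hdvdpm.1 hbp, ?_, Or.inr (Or.inr ?_)⟩
        · intro h
          have := congrArg Fin.val h
          rw [hwpa] at this
          exact hbpne (by omega)
        · rw [show ((wp : ℕ) - (k - 2)) = bp by omega]
          exact hadjp
    have hchar1 : ∀ w : Fin M, key i k w < key i k v → (myG i k).Adj v w → w ∈ E := by
      intro w hkw hadjw
      obtain ⟨hne, hcase⟩ := hadjw
      by_cases hwc : (w : ℕ) < k - 2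
      · rw [hEdef, Finset.mem_union]
        exact Or.inl (Finset.mem_Iio.mpr (by rw [Fin.lt_def]; simpa [hxdef] using hwc))
      · have hwb : (w : ℕ) - (k - 2) < 3 * 2 ^ i := by have := w.isLt; omega
        have hc : hadj i a ((w : ℕ) - (k - 2)) := by
          rcases hcase with hc | hc | hc
          · exact absurd hc hvc
          · exact absurd hc hwc
          · exact hc
        have hcvw : t ≤ cv i ((w : ℕ) - (k - 2)) := by
          by_contra hcon
          push_neg at hcon
          rw [key_ge hwc, hkeyv] at hkw
          have hcvle := cv_le i ((w : ℕ) - (k - 2))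
          have hblt2 := blt (n := 3 * 2 ^ i) (r := (w : ℕ) - (k - 2))
            (U := i + 1 - cv i ((w : ℕ) - (k - 2))) hva
            (show i + 1 - t < i + 1 - cv i ((w : ℕ) - (k - 2)) by omega)
          omega
        rw [hEdef, Finset.mem_union, Finset.mem_insert, Finset.mem_singleton]
        rcases nbr_classify hva hwb ht h1 h2 hc hcvw with hbeq | hbeq
        · exact Or.inr (Or.inr (Fin.ext (by rw [hwpa]; omega)))
        · exact Or.inr (Or.inl (Fin.ext (by rw [hwma]; omega)))
    have hmemE : earlierNbrs (myG i k) ((finCongr (Fintype.card_fin M)).trans (ord i k)) p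
        = ↑E := by
      ext w
      simp only [earlierNbrs, Set.mem_setOf_eq, Equiv.trans_apply, Finset.mem_coe]
      constructor
      · rintro ⟨j, hj, rfl, hadjw⟩
        have hkw : key i k (ord i k (finCongr (Fintype.card_fin M) j)) < key i k v :=
          (ord_lt_iff i k _ _).mp hj
        exact hchar1 _ hkw hadjw
      · intro hw
        obtain ⟨hkw, hadjw⟩ := hchar2 w hw
        have h4 : ord i k (finCongr (Fintype.card_fin M)
            (((finCongr (Fintype.card_fin M)).trans (ord i k)).symm w)) = w := by
          simpa [Equiv.trans_apply] using
            Equiv.apply_symm_apply ((finCongr (Fintype.card_fin M)).trans (ord i k)) w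
        refine ⟨((finCongr (Fintype.card_fin M)).trans (ord i k)).symm w, ?_, ?_, ?_⟩
        · have h5 := (ord_lt_iff i k (finCongr (Fintype.card_fin M)
            (((finCongr (Fintype.card_fin M)).trans (ord i k)).symm w))
            (finCongr (Fintype.card_fin M) p)).mpr (by rw [h4]; exact hkw)
          exact h5
        · simpa [Equiv.trans_apply] using h4.symm
        · exact hadjw
    constructor
    · rw [hmemE]
      intro u hu w hw huw
      have h1u := hchar2 u (by simpa using hu)
      have h1w := hchar2 w (by simpa using hw)
      rw [Finset.mem_coe, hEdef, Finset.mem_union, Finset.mem_Iio, Finset.mem_insert,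
        Finset.mem_singleton] at hu hw
      refine ⟨huw, ?_⟩
      rcases hu with hu | rfl | rfl
      · exact Or.inl (by rw [Fin.lt_def] at hu; simpa [hxdef] using hu)
      all_goals rcases hw with hw | rfl | rfl
      · exact Or.inr (Or.inl (by rw [Fin.lt_def] at hw; simpa [hxdef] using hw))
      · exact absurd rfl huw
      · refine Or.inr (Or.inr ?_)
        rw [show ((wm : ℕ) - (k - 2)) = bm by omega, show ((wp : ℕ) - (k - 2)) = bp by omega]
        exact hadjpm
      · exact Or.inr (Or.inl (by rw [Fin.lt_def] at hw; simpa [hxdef] using hw))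
      · refine Or.inr (Or.inr ?_)
        rw [show ((wm : ℕ) - (k - 2)) = bm by omega, show ((wp : ℕ) - (k - 2)) = bp by omega]
        exact hadj_symm hadjpm
      · exact absurd rfl huw
    · rw [hmemE, Set.ncard_coe_finset, hEdef]
      have hdisjE : Disjoint (Finset.Iio x) ({wm, wp} : Finset (Fin M)) := by
        rw [Finset.disjoint_left]
        intro b hb hb2
        rw [Finset.mem_Iio, Fin.lt_def] at hb
        simp only [Finset.mem_insert, Finset.mem_singleton] at hb2
        have hbx : (b : ℕ) < k - 2 := by simpa [hxdef] using hb
        rcases hb2 with rfl | rfl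
        · omega
        · omega
      rw [Finset.card_union_of_disjoint hdisjE, Fin.card_Iio, Finset.card_pair hwmwp]
      simp [hxdef]
      omega

end KTreeAux
/-- For all `k ≥ 2` and `i ≥ 1` there is a `k`-tree on `n = 3·2^i + k - 2` vertices with
a Hamiltonian path in which every induced path has size at most `2·log n`
(logarithm in base 2). -/
theorem exists_ktree_short_induced_paths (k : ℕ) (hk : 2 ≤ k) (i : ℕ) (hi : 1 ≤ i) :
    ∃ G : SimpleGraph (Fin (3 * 2 ^ i + k - 2)),
      IsKTree k G ∧
      (∃ (u v : Fin (3 * 2 ^ i + k - 2)) (p : G.Walk u v), p.IsPath ∧ ∀ w, w ∈ p.support) ∧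
      ∀ m : ℕ, HasInducedPathOfSize G m →
        (m : ℝ) ≤ 2 * Real.logb 2 ((3 * 2 ^ i + k - 2 : ℕ) : ℝ) := by
  refine ⟨KTreeAux.myG i k, KTreeAux.myG_ktree i k hk, KTreeAux.myG_ham i k hk, ?_⟩
  rintro m ⟨S, hS, ⟨φ⟩⟩
  have hm := KTreeAux.myG_indpath i k hk m S φ
  have hn1 : 1 ≤ 2 ^ i := Nat.one_le_two_pow
  have hMge : (3 * 2 ^ i : ℝ) ≤ ((3 * 2 ^ i + k - 2 : ℕ) : ℝ) := by
    have hcast : (3 * 2 ^ i + k - 2 : ℕ) = 3 * 2 ^ i + (k - 2) := by omega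
    rw [hcast]
    push_cast
    have : (0 : ℝ) ≤ ((k - 2 : ℕ) : ℝ) := Nat.cast_nonneg _
    linarith
  have hlog3 : (3 : ℝ) / 2 ≤ Real.logb 2 3 := by
    rw [Real.logb, le_div_iff₀ (Real.log_pos (by norm_num))]
    have h89 : Real.log 8 ≤ Real.log 9 := Real.log_le_log (by norm_num) (by norm_num)
    have e8 : Real.log 8 = 3 * Real.log 2 := by
      rw [show (8 : ℝ) = 2 ^ (3 : ℕ) by norm_num, Real.log_pow]
      push_cast
      ring
    have e9 : Real.log 9 = 2 * Real.log 3 := by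
      rw [show (9 : ℝ) = 3 ^ (2 : ℕ) by norm_num, Real.log_pow]
      push_cast
      ring
    linarith
  have hpos : (0 : ℝ) < 3 * 2 ^ i := by positivity
  have hlogM : (i : ℝ) + 3 / 2 ≤ Real.logb 2 ((3 * 2 ^ i + k - 2 : ℕ) : ℝ) := by
    have h1 : Real.logb 2 ((3 : ℝ) * 2 ^ i) ≤ Real.logb 2 ((3 * 2 ^ i + k - 2 : ℕ) : ℝ) :=
      Real.logb_le_logb_of_le (by norm_num) hpos hMge
    have h2 : Real.logb 2 ((3 : ℝ) * 2 ^ i) = Real.logb 2 3 + i := by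
      rw [Real.logb_mul (by norm_num) (by positivity), Real.logb_pow,
        Real.logb_self_eq_one (by norm_num)]
      ring
    linarith
  have hmr : (m : ℝ) ≤ 2 * (i : ℝ) + 3 := by exact_mod_cast Nat.cast_le.mpr hm
  calc (m : ℝ) ≤ 2 * (i : ℝ) + 3 := hmr
    _ = 2 * ((i : ℝ) + 3 / 2) := by ring
    _ ≤ 2 * Real.logb 2 ((3 * 2 ^ i + k - 2 : ℕ) : ℝ) := by linarith
end
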